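/- (Vanishing of bidifferential operators.) Let (m_{ij})_{i,j≥0} be a family of elements of K with only finitely many nonzero, and let W ⊆ K be a ℂ-subspace which is infinite-dimensional over ℂ. If Σ_{i,j} m_{ij} F^{(i)} G^{(j)} = 0 for all F ∈ K and all G ∈ W, then m_{ij} = 0 for all i, j. -/

import Mathlib

noncomputable section

open scoped BigOperators

/-- The field `K`: fraction field of the polynomial algebra `ℂ[u₀,u₁,u₂,…]`. -/
abbrev KK : Type := FractionRing (MvPolynomial ℕ ℂ)

/-- The generators `uₙ` of `K` (with `u = u₀`). -/
def uu (n : ℕ) : KK := algebraMap (MvPolynomial ℕ ℂ) KK (MvPolynomial.X n)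

/-- `V = ℂ[u, u₁^{±1}, u₂, …]`, as a subalgebra of `K`. -/
def VV : Subalgebra ℂ KK := Algebra.adjoin ℂ (Set.range uu ∪ {(uu 1)⁻¹})

/-- Generalized binomial coefficient `C(m,k)` for `m : ℤ`. -/
def binc (m : ℤ) (k : ℕ) : ℚ := (∏ j ∈ Finset.range k, ((m : ℚ) - (j : ℚ))) / (k.factorial : ℚ)

/-- A pseudodifferential operator `Σ_{n ≤ N} aₙ ∂ⁿ` is encoded by its coefficient
function `ℤ → K`; `IsPDO` says the support is bounded above. -/
def IsPDO (L : ℤ → KK) : Prop := ∃ N : ℤ, ∀ n : ℤ, N < n → L n = 0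

/-- A differential operator: coefficients vanish in negative degrees and above some degree. -/
def IsDiffOp (L : ℤ → KK) : Prop := ∃ N : ℤ, ∀ n : ℤ, (n < 0 ∨ N < n) → L n = 0

/-- Multiplication of pseudodifferential operators (coefficients of `A∘B`), determined by
`∂^i ∘ a = Σ_k C(i,k) a^{(k)} ∂^{i-k}`. -/
def pmul (d : Derivation ℂ KK KK) (A B : ℤ → KK) : ℤ → KK :=
  fun n => ∑ᶠ (i : ℤ), ∑ᶠ (k : ℕ), A i * ((binc i k : ℚ) : KK) * (⇑d)^[k] (B (n - i + k))

/-- Action of a differential operator `Σ pₙ∂ⁿ` on `f ∈ K`. -/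
def papply (d : Derivation ℂ KK KK) (P : ℤ → KK) (f : KK) : KK :=
  ∑ᶠ (n : ℕ), P (n : ℤ) * (⇑d)^[n] f

/-- The formal adjoint `P* = Σ (−∂)ⁿ ∘ pₙ` of a pseudodifferential operator. -/
def padj (d : Derivation ℂ KK KK) (P : ℤ → KK) : ℤ → KK :=
  fun n => ∑ᶠ (k : ℕ), (-1 : KK) ^ (n + (k : ℤ)) * ((binc (n + (k : ℤ)) k : ℚ) : KK) *
    (⇑d)^[k] (P (n + (k : ℤ)))

/-- The operator `∂^m` as a pseudodifferential operator. -/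
def dpow (m : ℤ) : ℤ → KK := fun n => if n = m then 1 else 0

/-- The operator of multiplication by `a ∈ K`. -/
def mulOp (a : KK) : ℤ → KK := fun n => if n = 0 then a else 0

/-- `A` and `B` are right coprime: every common right divisor (in `K[∂]`) has order 0. -/
def RightCoprime (d : Derivation ℂ KK KK) (A B : ℤ → KK) : Prop :=
  ∀ D : ℤ → KK, IsDiffOp D →
    (∃ A₁ : ℤ → KK, IsDiffOp A₁ ∧ A = pmul d A₁ D) →
    (∃ B₁ : ℤ → KK, IsDiffOp B₁ ∧ B = pmul d B₁ D) →
    ∀ n : ℤ, n ≠ 0 → D n = 0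

/-- The variational derivative `δf/δu = D_f^*(1)`, where `DF f` is the Fréchet derivative
of `f`. -/
def vard (d : Derivation ℂ KK KK) (DF : KK → ℤ → KK) (f : KK) : KK :=
  papply d (padj d (DF f)) 1

/-- The Hamiltonian identity (14) for the pair `(A,B)`, `L = A∘B⁻¹`. -/
def HamIdent (d : Derivation ℂ KK KK) (DF : KK → ℤ → KK) (A B : ℤ → KK) : Prop :=
  ∀ F ∈ VV, ∀ G ∈ VV,
    papply d (padj d A)
      (papply d (DF (papply d B F)) (papply d A G)
        + papply d (padj d (DF (papply d A G))) (papply d B F)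
        - papply d (DF (papply d B G)) (papply d A F)
        + papply d (padj d (DF (papply d B G))) (papply d A F))
    = papply d (padj d B)
      (papply d (DF (papply d A G)) (papply d A F)
        - papply d (DF (papply d A F)) (papply d A G))

/-- `L` is a Hamiltonian operator: a skewadjoint rational operator `L = A∘B⁻¹`
(`A`, `B` right coprime) satisfying the identity (14) for all `F, G ∈ V`. -/
def IsHamiltonian (d : Derivation ℂ KK KK) (DF : KK → ℤ → KK) (L : ℤ → KK) : Prop :=
  IsPDO L ∧ padj d L = -L ∧
    ∃ A B : ℤ → KK, IsDiffOp A ∧ IsDiffOp B ∧ B ≠ 0 ∧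
      pmul d L B = A ∧ RightCoprime d A B ∧ HamIdent d DF A B

/-- `(d/du)^k P` evaluated at `u = u₀`. -/
def pev (P : Polynomial ℂ) (k : ℕ) : KK :=
  Polynomial.aeval (uu 0) ((⇑Polynomial.derivative)^[k] P)

/-- The right-hand side `G₁` of the Krichever–Novikov equation. -/
def GG1 (P : Polynomial ℂ) : KK :=
  uu 3 - (3/2 : KK) * (uu 2)^2 / uu 1 + pev P 0 / uu 1

def GG2 (P : Polynomial ℂ) : KK :=
  uu 5 - 5 * uu 4 * uu 2 / uu 1 - (5/2 : KK) * (uu 3)^2 / uu 1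
    + (25/2 : KK) * uu 3 * (uu 2)^2 / (uu 1)^2
    - (45/8 : KK) * (uu 2)^4 / (uu 1)^3
    - (5/3 : KK) * pev P 0 * uu 3 / (uu 1)^2
    + (25/6 : KK) * pev P 0 * (uu 2)^2 / (uu 1)^3
    - (5/3 : KK) * pev P 1 * uu 2 / uu 1
    - (5/18 : KK) * (pev P 0)^2 / (uu 1)^3
    + (5/9 : KK) * uu 1 * pev P 2

def GG3 (P : Polynomial ℂ) : KK :=
  uu 7 - 7 * uu 2 * uu 6 / uu 1
    - (7/6 : KK) * (uu 5 / (uu 1)^2) * (2 * pev P 0 + 12 * uu 3 * uu 1 - 27 * (uu 2)^2)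
    - (21/2 : KK) * (uu 4)^2 / uu 1
    + (21/2 : KK) * (uu 4 / (uu 1)^3) * (2 * pev P 0 - 11 * (uu 2)^2)
    - (7/3 : KK) * (uu 4 / (uu 1)^2) * (2 * pev P 1 * uu 1 - 51 * uu 2 * uu 3)
    + (49/2 : KK) * (uu 3)^3 / (uu 1)^2
    + (7/12 : KK) * ((uu 3)^2 / (uu 1)^3) * (22 * pev P 0 - 417 * (uu 2)^2)
    + (2499/8 : KK) * ((uu 2)^4 / (uu 1)^4) * uu 3
    + (91/3 : KK) * pev P 1 * (uu 2 / (uu 1)^2) * uu 3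
    - (595/6 : KK) * pev P 0 * ((uu 2)^2 / (uu 1)^4) * uu 3
    - (35/18 : KK) * (uu 3 / (uu 1)^4) * (2 * pev P 2 * (uu 1)^4 - (pev P 0)^2)
    - (1575/16 : KK) * (uu 2)^6 / (uu 1)^5
    + (1813/24 : KK) * ((uu 2)^4 / (uu 1)^5) * pev P 0
    - (203/6 : KK) * ((uu 2)^3 / (uu 1)^3) * pev P 1
    + (49/36 : KK) * ((uu 2)^2 / (uu 1)^5) * (6 * pev P 2 * (uu 1)^4 - 5 * (pev P 0)^2)
    - (7/9 : KK) * (uu 2 / (uu 1)^3) * (2 * pev P 3 * (uu 1)^4 - 5 * pev P 0 * pev P 1)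
    + (7/54 : KK) * (pev P 0)^3 / (uu 1)^5
    - (7/9 : KK) * pev P 2 * pev P 0 / uu 1
    + (7/9 : KK) * pev P 4 * (uu 1)^3
    - (7/18 : KK) * (pev P 1)^2 / uu 1

/-- `H₀ = u₁ ∘ ∂⁻¹ ∘ u₁`. -/
def H0 (d : Derivation ℂ KK KK) : ℤ → KK :=
  pmul d (mulOp (uu 1)) (pmul d (dpow (-1)) (mulOp (uu 1)))

/-- `H₁`. -/
def H1 (d : Derivation ℂ KK KK) (P : Polynomial ℂ) : ℤ → KK :=
  (1/2 : KK) • (pmul d (mulOp ((uu 1)^2)) (dpow 3) + pmul d (dpow 3) (mulOp ((uu 1)^2)))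
    + pmul d (mulOp (2 * uu 3 * uu 1 - (9/2 : KK) * (uu 2)^2 - (2/3 : KK) * pev P 0)) (dpow 1)
    + pmul d (dpow 1) (mulOp (2 * uu 3 * uu 1 - (9/2 : KK) * (uu 2)^2 - (2/3 : KK) * pev P 0))
    + pmul d (mulOp (GG1 P)) (pmul d (dpow (-1)) (mulOp (GG1 P)))
    + pmul d (mulOp (uu 1)) (pmul d (dpow (-1)) (mulOp (GG2 P)))
    + pmul d (mulOp (GG2 P)) (pmul d (dpow (-1)) (mulOp (uu 1)))

/-- The coefficient `Q` appearing in `H₂`. -/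
def QH2 (P : Polynomial ℂ) : KK :=
  uu 5 * uu 1 - 9 * uu 3 * uu 2 + (19/2 : KK) * (uu 3)^2
    - (2/3 : KK) * (uu 3 / uu 1) * (5 * pev P 0 - 39 * (uu 2)^2)
    + ((uu 2)^2 / (uu 1)^2) * (5 * pev P 0 - 9 * (uu 2)^2)
    + (2/3 : KK) * (pev P 0)^2 / (uu 1)^2
    + (uu 1)^2 * pev P 2

/-- `H₂`. -/
def H2 (d : Derivation ℂ KK KK) (P : Polynomial ℂ) : ℤ → KK :=
  (1/2 : KK) • (pmul d (mulOp ((uu 1)^2)) (dpow 5) + pmul d (dpow 5) (mulOp ((uu 1)^2)))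
    + pmul d (mulOp (3 * uu 3 * uu 1 - (19/2 : KK) * (uu 2)^2 - pev P 0)) (dpow 3)
    + pmul d (dpow 3) (mulOp (3 * uu 3 * uu 1 - (19/2 : KK) * (uu 2)^2 - pev P 0))
    + pmul d (mulOp (QH2 P)) (dpow 1) + pmul d (dpow 1) (mulOp (QH2 P))
    + pmul d (mulOp (GG1 P)) (pmul d (dpow (-1)) (mulOp (GG2 P)))
    + pmul d (mulOp (GG2 P)) (pmul d (dpow (-1)) (mulOp (GG1 P)))
    + pmul d (mulOp (uu 1)) (pmul d (dpow (-1)) (mulOp (GG3 P)))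
    + pmul d (mulOp (GG3 P)) (pmul d (dpow (-1)) (mulOp (uu 1)))

/-- `B₀ = u₁⁻¹ ∘ ∂ ∘ u₁⁻¹ = H₀⁻¹`. -/
def B0 (d : Derivation ℂ KK KK) : ℤ → KK :=
  pmul d (mulOp (uu 1)⁻¹) (pmul d (dpow 1) (mulOp (uu 1)⁻¹))

/-- The Lie bracket `{F,G} = X_F(G) − X_G(F)` on `K` (where `X` sends `F` to the
evolutionary derivation `X_F`). -/
def bracket (X : KK → Derivation ℂ KK KK) (F G : KK) : KK := X F G - X G F


set_option maxHeartbeats 1000000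
set_option synthInstance.maxHeartbeats 1000000

lemma exists_indep {F V : Type*} [Field F] [AddCommGroup V] [Module F V]
    (W : Submodule F V) (h : ¬ Module.Finite F W) (k : ℕ) :
    ∃ g : Fin k → V, (∀ l, g l ∈ W) ∧ LinearIndependent F g := by
  have hinfb : Infinite (Module.Basis.ofVectorSpaceIndex F W) := by
    by_contra hfin'
    rw [not_infinite_iff_finite] at hfin'
    have : Fintype (Module.Basis.ofVectorSpaceIndex F W) := Fintype.ofFinite _
    exact h (Module.Finite.of_basis (Module.Basis.ofVectorSpace F W))
  let bW := Module.Basis.ofVectorSpace F W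
  let emb : Fin k ↪ Module.Basis.ofVectorSpaceIndex F W :=
    (Fin.valEmbedding).trans (Infinite.natEmbedding _)
  refine ⟨fun l => (bW (emb l) : V), fun l => (bW (emb l)).2, ?_⟩
  have h1 : LinearIndependent F (fun l => bW (emb l)) :=
    bW.linearIndependent.comp emb emb.injective
  exact h1.map' W.subtype (Submodule.ker_subtype W)


namespace St6
open MvPolynomial
abbrev RR : Type := MvPolynomial ℕ ℂ


/-- deglex order map -/
def DD (m : ℕ →₀ ℕ) : Lex (ℕ →₀ ℕ) :=
  toLex (Finsupp.single 0 (m.sum fun _ k => k) + m.mapDomain Nat.succ)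

lemma DD_add (a b : ℕ →₀ ℕ) : DD (a + b) = DD a + DD b := by
  unfold DD
  rw [Finsupp.sum_add_index (by simp) (by simp), Finsupp.mapDomain_add, Finsupp.single_add,
    add_add_add_comm]
  rfl

lemma DD_apply_zero (m : ℕ →₀ ℕ) : (ofLex (DD m)) 0 = m.sum fun _ k => k := by
  unfold DD
  simp [Finsupp.mapDomain_notin_range (f := Nat.succ) m 0 (by simp [Nat.succ_ne_zero])]

lemma DD_apply_succ (m : ℕ →₀ ℕ) (n : ℕ) : (ofLex (DD m)) (n+1) = m n := by
  unfold DD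
  simp [Finsupp.single_apply, Finsupp.mapDomain_apply Nat.succ_injective]

lemma DD_inj : Function.Injective DD := by
  intro a b h
  ext n
  have := congrArg (fun x => (ofLex x) (n+1)) h
  simpa [DD_apply_succ] using this

lemma le_apply_zero_of_le {x y : Lex (ℕ →₀ ℕ)} (h : x ≤ y) : (ofLex x) 0 ≤ (ofLex y) 0 := by
  rcases lt_or_eq_of_le h with h | h
  · rcases h with ⟨j, hj, hlt⟩
    rcases Nat.eq_zero_or_pos j with rfl | hp
    · exact le_of_lt hlt
    · exact le_of_eq (hj 0 hp)
  · exact le_of_eq (congrArg (fun x => (ofLex x) 0) h)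

lemma supDegree_DD_zero {f : RR} (hf : f ≠ 0) :
    (ofLex (AddMonoidAlgebra.supDegree DD f)) 0 = f.totalDegree := by
  obtain ⟨a, ha, he⟩ := AddMonoidAlgebra.exists_supDegree_mem_support DD hf
  apply le_antisymm
  · rw [he, DD_apply_zero]
    exact MvPolynomial.le_totalDegree ha
  · rw [MvPolynomial.totalDegree]
    apply Finset.sup_le
    intro m hm
    rw [← DD_apply_zero]
    have h1 : DD m ≤ AddMonoidAlgebra.supDegree DD f := Finset.le_sup hm
    exact le_apply_zero_of_le h1

lemma totalDegree_mul_eq {f g : RR} (hf : f ≠ 0) (hg : g ≠ 0) :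
    (f * g).totalDegree = f.totalDegree + g.totalDegree := by
  have hfg : f * g ≠ 0 := mul_ne_zero hf hg
  have hsup : AddMonoidAlgebra.supDegree DD (f * g)
      = AddMonoidAlgebra.supDegree DD f + AddMonoidAlgebra.supDegree DD g := by
    apply AddMonoidAlgebra.supDegree_mul DD_inj DD_add _ hf hg
    apply mul_ne_zero <;>
      rwa [Ne, AddMonoidAlgebra.leadingCoeff_eq_zero DD_inj]
  have h2 : (ofLex (AddMonoidAlgebra.supDegree DD (f * g))) 0
      = (ofLex (AddMonoidAlgebra.supDegree DD f)) 0 + (ofLex (AddMonoidAlgebra.supDegree DD g)) 0 := by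
    rw [hsup]; rfl
  rw [supDegree_DD_zero hfg, supDegree_DD_zero hf, supDegree_DD_zero hg] at h2
  exact h2




lemma vars_pderiv (f : RR) (i : ℕ) : (pderiv i f).vars ⊆ f.vars := by
  classical
  nth_rewrite 1 [f.as_sum]
  rw [map_sum]
  refine (vars_sum_subset _ _).trans ?_
  intro j hj
  simp only [Finset.mem_biUnion] at hj
  obtain ⟨m, hm, hjm⟩ := hj
  rw [pderiv_monomial] at hjm
  by_cases hc : (coeff m f * (m i : ℂ)) = 0
  · rw [hc, monomial_zero] at hjm
    simp at hjm
  · rw [vars_monomial hc] at hjm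
    have : j ∈ m.support := Finsupp.support_tsub hjm
    exact (mem_vars j).2 ⟨m, hm, this⟩

lemma pderiv_ne_zero_of_mem_vars {f : RR} {N : ℕ} (hN : N ∈ f.vars) :
    pderiv N f ≠ 0 := by
  classical
  obtain ⟨m, hm, hmN⟩ := (mem_vars N).1 hN
  have hmN' : m N ≠ 0 := Finsupp.mem_support_iff.1 hmN
  intro h0
  have hco : coeff (m - Finsupp.single N 1) (pderiv N f) = coeff m f * (m N : ℂ) := by
    nth_rewrite 1 [f.as_sum]
    rw [map_sum]
    simp_rw [pderiv_monomial]
    rw [coeff_sum]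
    rw [Finset.sum_congr rfl (fun b _ => coeff_monomial (m - Finsupp.single N 1) _ _)]
    rw [Finset.sum_eq_single m]
    · simp
    · intro b hb hbm
      by_cases hbe : b - Finsupp.single N 1 = m - Finsupp.single N 1
      · rw [if_pos hbe]
        by_cases hbN : b N = 0
        · simp [hbN]
        · exfalso
          apply hbm
          ext j
          by_cases hj : j = N
          · subst hj
            have h1 := congrArg (fun g => g j + 1) hbe
            simp only [Finsupp.tsub_apply, Finsupp.single_apply] at h1
            simp only [if_true] at h1
            omega
          · have h1 := congrArg (fun g => g j) hbe
            simp only [Finsupp.tsub_apply, Finsupp.single_apply] at h1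
            rw [if_neg (fun hh => hj hh.symm)] at h1
            simpa using h1
      · rw [if_neg hbe]
    · intro hmm
      exact absurd hm hmm
  rw [h0] at hco
  simp only [coeff_zero] at hco
  have : coeff m f ≠ 0 := Finsupp.mem_support_iff.1 hm
  have : (m N : ℂ) ≠ 0 := Nat.cast_ne_zero.2 hmN'
  exact ‹coeff m f ≠ 0› (by
    rcases mul_eq_zero.1 hco.symm with h | h
    · exact h
    · exact absurd h this)

lemma totalDegree_X_mul_pderiv (f : RR) (i : ℕ) :
    (X (i+1) * pderiv i f).totalDegree ≤ f.totalDegree := by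
  classical
  nth_rewrite 1 [f.as_sum]
  rw [map_sum, Finset.mul_sum]
  refine (totalDegree_finset_sum _ _).trans ?_
  apply Finset.sup_le
  intro m hm
  rw [pderiv_monomial]
  rw [X, monomial_mul, one_mul]
  by_cases hc : (coeff m f * (m i : ℂ)) = 0
  · rw [hc, monomial_zero]
    simp
  · rw [totalDegree_monomial _ hc]
    have hmi : m i ≠ 0 := by
      intro h; apply hc; simp [h]
    have hsplit : m = (m - Finsupp.single i 1) + Finsupp.single i 1 := by
      ext j
      simp only [Finsupp.add_apply, Finsupp.tsub_apply, Finsupp.single_apply]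
      by_cases hj : i = j
      · subst hj; rw [if_pos rfl]; omega
      · simp [hj]
    have hms : (Finsupp.single (i+1) 1 + (m - Finsupp.single i 1)).sum (fun _ e => e)
        = m.sum fun _ e => e := by
      nth_rewrite 2 [hsplit]
      rw [Finsupp.sum_add_index (by simp) (by simp),
        Finsupp.sum_add_index (by simp) (by simp)]
      simp [Finsupp.sum_single_index]
      omega
    rw [hms]
    exact le_totalDegree hm

/-- the derivation `∑_{i∈s} X_{i+1} ∂_i` on `RR`. -/
def gder (s : Finset ℕ) : Derivation ℂ RR RR :=
  ∑ i ∈ s, (X (i+1) : RR) • pderiv i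

lemma gder_apply (s : Finset ℕ) (f : RR) :
    gder s f = ∑ i ∈ s, X (i+1) * pderiv i f := by
  unfold gder
  induction s using Finset.induction with
  | empty => simp
  | insert _ _ h ih =>
    rw [Finset.sum_insert h, Finset.sum_insert h, ← ih]
    rfl

lemma totalDegree_gder_le (s : Finset ℕ) (f : RR) :
    (gder s f).totalDegree ≤ f.totalDegree := by
  rw [gder_apply]
  exact (totalDegree_finset_sum _ _).trans
    (Finset.sup_le fun i _ => totalDegree_X_mul_pderiv f i)

lemma pderiv_gder (s : Finset ℕ) (f : RR) (N : ℕ) (hvs : f.vars ⊆ s)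
    (hvN : ∀ j ∈ f.vars, j < N + 1) :
    pderiv (N+1) (gder s f) = pderiv N f := by
  classical
  rw [gder_apply, map_sum]
  have hterm : ∀ i ∈ s, pderiv (N+1) (X (i+1) * pderiv i f)
      = if i = N then pderiv N f else 0 := by
    intro i _
    rw [pderiv_mul]
    have h2 : pderiv (N+1) (pderiv i f) = 0 := by
      apply pderiv_eq_zero_of_notMem_vars
      intro hmem
      have := hvN _ (vars_pderiv f i hmem)
      omega
    rw [h2, mul_zero, add_zero]
    by_cases hi : i = N
    · subst hi; simp
    · rw [pderiv_X_of_ne (by omega), zero_mul, if_neg hi]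
  rw [Finset.sum_congr rfl hterm, Finset.sum_ite_eq' s N (fun _ => pderiv N f)]
  by_cases hN : N ∈ s
  · rw [if_pos hN]
  · rw [if_neg hN]
    rw [pderiv_eq_zero_of_notMem_vars (fun hm => hN (hvs hm))]

lemma dalg (d : Derivation ℂ KK KK) (hd : ∀ n : ℕ, d (uu n) = uu (n + 1))
    (s : Finset ℕ) {f : RR} (hf : f.vars ⊆ s) :
    d (algebraMap RR KK f) = algebraMap RR KK (gder s f) := by
  have := MvPolynomial.derivation_eq_of_forall_mem_vars
    (D₁ := d.compAlgebraMap RR) (D₂ := (Algebra.linearMap RR KK).compDer (gder s))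
    (f := f) ?_
  · simpa using this
  · intro i hi
    have his : i ∈ s := hf hi
    have h1 : (d.compAlgebraMap RR) (X i) = uu (i+1) := by
      simpa [uu] using hd i
    rw [h1]
    have h2 : gder s (X i) = X (i+1) := by
      rw [gder_apply]
      rw [Finset.sum_congr rfl (fun j _ => by rw [pderiv_X (R := ℂ)])]
      classical
      rw [Finset.sum_congr rfl (fun j hj => ?_), Finset.sum_ite_eq' s i
        (fun j => (X (j+1) : RR))]
      · rw [if_pos his]
      · by_cases hji : j = i
        · subst hji; simp
        · simp [Pi.single_apply, hji]
    simp [h2, uu]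




lemma eq_C_of_totalDegree_zero {f : RR} (h : f.totalDegree = 0) :
    f = C (coeff 0 f) := by
  rw [totalDegree_eq_zero_iff] at h
  ext m
  rcases eq_or_ne m 0 with rfl | hm
  · simp
  · rw [coeff_C, if_neg (fun he => hm he.symm)]
    by_contra hc
    have hsup : m ∈ f.support := Finsupp.mem_support_iff.2 hc
    apply hm
    ext j
    exact h m hsup j

lemma vars_nonempty_of_totalDegree_ne_zero {f : RR} (h : f.totalDegree ≠ 0) :
    ∃ N, N ∈ f.vars := by
  by_contra hc
  push_neg at hc
  apply h
  rw [totalDegree_eq_zero_iff]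
  intro m hm x
  by_contra hx
  exact hc x ((mem_vars x).2 ⟨m, hm, Finsupp.mem_support_iff.2 hx⟩)

lemma const_of_dvd_gder (s : Finset ℕ) {f : RR} (hf : f ≠ 0) (hvs : f.vars ⊆ s)
    (hdvd : f ∣ gder s f) : f.totalDegree = 0 := by
  by_contra hdeg
  obtain ⟨x0, hx0⟩ := vars_nonempty_of_totalDegree_ne_zero hdeg
  have hne : f.vars.Nonempty := ⟨x0, hx0⟩
  set N := f.vars.max' hne with hNdef
  have hNv : N ∈ f.vars := f.vars.max'_mem hne
  have hmax : ∀ j ∈ f.vars, j ≤ N := fun j hj => f.vars.le_max' j hj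
  obtain ⟨r, hr⟩ := hdvd
  have hNf : pderiv (N+1) f = 0 :=
    pderiv_eq_zero_of_notMem_vars (fun hm => by have := hmax _ hm; omega)
  have hpz : pderiv (N+1) (gder s f) = 0 := by
    rcases eq_or_ne r 0 with rfl | hrne
    · rw [hr, mul_zero, map_zero]
    · have htr : r.totalDegree = 0 := by
        have h1 := totalDegree_gder_le s f
        rw [hr, totalDegree_mul_eq hf hrne] at h1
        omega
      rw [hr, eq_C_of_totalDegree_zero htr, pderiv_mul, pderiv_C, mul_zero, add_zero,
        hNf, zero_mul]
  rw [pderiv_gder s f N hvs (fun j hj => by have := hmax _ hj; omega)] at hpz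
  exact pderiv_ne_zero_of_mem_vars hNv hpz

lemma const_of_deriv (d : Derivation ℂ KK KK) (hd : ∀ n : ℕ, d (uu n) = uu (n + 1))
    {x : KK} (hx : d x = 0) : ∃ z : ℂ, x = algebraMap ℂ KK z := by
  rcases eq_or_ne x 0 with rfl | hxne
  · exact ⟨0, by simp⟩
  set p := IsFractionRing.num RR x with hp
  set q := IsFractionRing.den RR x with hq
  have hq0 : (q : RR) ≠ 0 := nonZeroDivisors.coe_ne_zero q
  have hp0 : p ≠ 0 := fun h => hxne ((IsFractionRing.num_eq_zero _).1 h)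
  have halgq : algebraMap RR KK (q : RR) ≠ 0 :=
    IsFractionRing.to_map_ne_zero_of_mem_nonZeroDivisors q.2
  have hxq : x * algebraMap RR KK (q : RR) = algebraMap RR KK p := by
    have h2 := IsFractionRing.mk'_num_den' RR x
    rw [div_eq_iff halgq] at h2
    exact h2.symm
  classical
  set s : Finset ℕ := p.vars ∪ (q : RR).vars with hs
  have hps : p.vars ⊆ s := Finset.subset_union_left
  have hqs : (q : RR).vars ⊆ s := Finset.subset_union_right
  have hdq : d (algebraMap RR KK (q : RR)) = algebraMap RR KK (gder s (q : RR)) :=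
    dalg d hd s hqs
  have hdp : d (algebraMap RR KK p) = algebraMap RR KK (gder s p) := dalg d hd s hps
  have hder : x * algebraMap RR KK (gder s (q : RR)) = algebraMap RR KK (gder s p) := by
    have h1 := congrArg d hxq
    rw [Derivation.leibniz, hx, smul_zero, add_zero, smul_eq_mul, hdq, hdp] at h1
    exact h1
  have hpq : p * gder s (q : RR) = (q : RR) * gder s p := by
    apply IsFractionRing.injective RR KK
    rw [map_mul, map_mul, ← hxq]
    calc x * algebraMap RR KK (q : RR) * algebraMap RR KK (gder s (q : RR))
        = algebraMap RR KK (q : RR) * (x * algebraMap RR KK (gder s (q : RR))) := by ring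
    _ = algebraMap RR KK (q : RR) * algebraMap RR KK (gder s p) := by rw [hder]
  have hred : IsRelPrime p (q : RR) := IsFractionRing.num_den_reduced RR x
  have hqd : (q : RR) ∣ gder s (q : RR) :=
    (hred.symm).dvd_of_dvd_mul_left ⟨gder s p, hpq⟩
  have hpd : p ∣ gder s p :=
    hred.dvd_of_dvd_mul_left ⟨gder s (q : RR), hpq.symm⟩
  have htp : p.totalDegree = 0 := const_of_dvd_gder s hp0 hps hpd
  have htq : (q : RR).totalDegree = 0 := const_of_dvd_gder s hq0 hqs hqd
  set a := coeff 0 p with ha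
  set b := coeff 0 (q : RR) with hb
  have hpa : p = C a := eq_C_of_totalDegree_zero htp
  have hqb : (q : RR) = C b := eq_C_of_totalDegree_zero htq
  have hb0 : b ≠ 0 := fun h => hq0 (by rw [hqb, h, map_zero])
  refine ⟨a / b, ?_⟩
  have hCa : algebraMap RR KK (C a) = algebraMap ℂ KK a := by
    rw [← MvPolynomial.algebraMap_eq, ← IsScalarTower.algebraMap_apply]
  have hCb : algebraMap RR KK (C b) = algebraMap ℂ KK b := by
    rw [← MvPolynomial.algebraMap_eq, ← IsScalarTower.algebraMap_apply]
  have hb0' : algebraMap ℂ KK b ≠ 0 := by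
    simpa using (map_ne_zero_iff _ (algebraMap ℂ KK).injective).2 hb0
  rw [map_div₀]
  rw [hpa, hCa, hqb, hCb] at hxq
  rw [eq_div_iff hb0']
  exact hxq



lemma dmul (d : Derivation ℂ KK KK) (x y : KK) : d (x * y) = d x * y + x * d y := by
  rw [Derivation.leibniz, smul_eq_mul, smul_eq_mul]; ring

lemma dnat (d : Derivation ℂ KK KK) (c : ℕ) : d (c : KK) = 0 := by
  rw [← map_natCast (algebraMap ℂ KK) c, Derivation.map_algebraMap]

lemma iter_leibniz (d : Derivation ℂ KK KK) (a b : KK) (n : ℕ) :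
    (⇑d)^[n] (a * b) = ∑ k ∈ Finset.range (n+1),
      (n.choose k : KK) * ((⇑d)^[k] a * (⇑d)^[n-k] b) := by
  induction n with
  | zero => simp
  | succ n ih =>
    rw [Function.iterate_succ_apply', ih, map_sum]
    have hterm : ∀ k ∈ Finset.range (n+1),
        d ((n.choose k : KK) * ((⇑d)^[k] a * (⇑d)^[n-k] b))
        = (n.choose k : KK) * ((⇑d)^[k+1] a * (⇑d)^[n-k] b)
          + (n.choose k : KK) * ((⇑d)^[k] a * (⇑d)^[n-k+1] b) := by
      intro k _
      rw [dmul, dnat, dmul, Function.iterate_succ_apply', Function.iterate_succ_apply']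
      ring
    rw [Finset.sum_congr rfl hterm, Finset.sum_add_distrib]
    -- handle second sum: reindex
    have h2 : ∑ k ∈ Finset.range (n+1), (n.choose k : KK) * ((⇑d)^[k] a * (⇑d)^[n-k+1] b)
        = a * (⇑d)^[n+1] b
          + ∑ k ∈ Finset.range n, (n.choose (k+1) : KK) * ((⇑d)^[k+1] a * (⇑d)^[n-k] b) := by
      rw [Finset.sum_range_succ' (fun k => (n.choose k : KK) * ((⇑d)^[k] a * (⇑d)^[n-k+1] b)) n]
      rw [add_comm]
      congr 1
      · simp
      · apply Finset.sum_congr rfl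
        intro k hk
        have hk' : k < n := Finset.mem_range.1 hk
        have : n - (k+1) + 1 = n - k := by omega
        rw [this]
    rw [h2]
    have h1 : ∑ k ∈ Finset.range (n+1), (n.choose k : KK) * ((⇑d)^[k+1] a * (⇑d)^[n-k] b)
        + (a * (⇑d)^[n+1] b
          + ∑ k ∈ Finset.range n, (n.choose (k+1) : KK) * ((⇑d)^[k+1] a * (⇑d)^[n-k] b))
        = a * (⇑d)^[n+1] b
          + ∑ k ∈ Finset.range (n+1), ((n+1).choose (k+1) : KK) * ((⇑d)^[k+1] a * (⇑d)^[n-k] b) := by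
      have hext : ∑ k ∈ Finset.range (n+1), (n.choose (k+1) : KK) * ((⇑d)^[k+1] a * (⇑d)^[n-k] b)
          = ∑ k ∈ Finset.range n, (n.choose (k+1) : KK) * ((⇑d)^[k+1] a * (⇑d)^[n-k] b) := by
        rw [Finset.sum_range_succ, Nat.choose_succ_self]
        simp
      rw [← hext]
      have hsum : ∑ k ∈ Finset.range (n+1), (n.choose k : KK) * ((⇑d)^[k+1] a * (⇑d)^[n-k] b)
          + ∑ k ∈ Finset.range (n+1), (n.choose (k+1) : KK) * ((⇑d)^[k+1] a * (⇑d)^[n-k] b)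
          = ∑ k ∈ Finset.range (n+1), ((n+1).choose (k+1) : KK) * ((⇑d)^[k+1] a * (⇑d)^[n-k] b) := by
        rw [← Finset.sum_add_distrib]
        apply Finset.sum_congr rfl
        intro k _
        rw [Nat.choose_succ_succ n k]
        push_cast
        ring
      linear_combination hsum
    rw [h1]
    rw [Finset.sum_range_succ' (fun k => ((n+1).choose k : KK) * ((⇑d)^[k] a * (⇑d)^[n+1-k] b)) (n+1)]
    have : ∀ k ∈ Finset.range (n+1),
        ((n+1).choose (k+1) : KK) * ((⇑d)^[k+1] a * (⇑d)^[n+1-(k+1)] b)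
        = ((n+1).choose (k+1) : KK) * ((⇑d)^[k+1] a * (⇑d)^[n-k] b) := by
      intro k _
      have hnk : n + 1 - (k+1) = n - k := by omega
      rw [hnk]
    rw [Finset.sum_congr rfl this]
    simp [add_comm]

lemma solDep (d : Derivation ℂ KK KK)
    (hC : ∀ x : KK, d x = 0 → ∃ z : ℂ, x = algebraMap ℂ KK z) :
    ∀ (n : ℕ) (c : ℕ → KK), c n ≠ 0 → ∀ g : Fin (n+1) → KK,
      (∀ l, ∑ j ∈ Finset.range (n+1), c j * (⇑d)^[j] (g l) = 0) →
      ¬ LinearIndependent ℂ g := by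
  intro n
  induction n with
  | zero =>
    intro c hc g hg hli
    have h0 := hg 0
    rw [Finset.sum_range_one] at h0
    simp only [Function.iterate_zero, id_eq] at h0
    exact hli.ne_zero 0 ((mul_eq_zero.1 h0).resolve_left hc)
  | succ n ih =>
    intro c hc g hg hli
    have hg0 : g 0 ≠ 0 := hli.ne_zero 0
    set q : Fin (n+1) → KK := fun l => g l.succ * (g 0)⁻¹ with hqdef
    set e : ℕ → KK := fun m => ∑ j ∈ Finset.range (n+2),
      (j.choose m : KK) * (c j * (⇑d)^[j-m] (g 0)) with hedef
    have key : ∀ h : KK, ∑ j ∈ Finset.range (n+2), c j * (⇑d)^[j] (g 0 * h)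
        = ∑ m ∈ Finset.range (n+2), e m * (⇑d)^[m] h := by
      intro h
      have h1 : ∀ j ∈ Finset.range (n+2), c j * (⇑d)^[j] (g 0 * h)
          = ∑ m ∈ Finset.range (n+2), (j.choose m : KK) * (c j * (⇑d)^[j-m] (g 0)) * (⇑d)^[m] h := by
        intro j hj
        have hj' : j + 1 ≤ n + 2 := by
          have := Finset.mem_range.1 hj; omega
        rw [mul_comm (g 0) h, iter_leibniz d h (g 0) j, Finset.mul_sum]
        rw [Finset.sum_subset (Finset.range_subset_range.2 hj')]
        · apply Finset.sum_congr rfl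
          intro m _
          ring
        · intro m _ hm
          have : j < m := by
            simp only [Finset.mem_range] at hm ⊢
            omega
          rw [Nat.choose_eq_zero_of_lt this]
          push_cast
          ring
      rw [Finset.sum_congr rfl h1, Finset.sum_comm]
      apply Finset.sum_congr rfl
      intro m _
      rw [hedef]
      simp only []
      rw [Finset.sum_mul]
    have he0 : e 0 = 0 := by
      have h0 := hg 0
      rw [hedef]
      simp only [Nat.choose_zero_right, Nat.cast_one, one_mul, Nat.sub_zero]
      exact h0
    have hetop : e (n+1) = c (n+1) * g 0 := by
      rw [hedef]
      simp only []
      rw [Finset.sum_range_succ]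
      have hzero : ∀ j ∈ Finset.range (n+1), (j.choose (n+1) : KK) * (c j * (⇑d)^[j-(n+1)] (g 0)) = 0 := by
        intro j hj
        rw [Nat.choose_eq_zero_of_lt (Finset.mem_range.1 hj)]
        push_cast
        ring
      rw [Finset.sum_congr rfl hzero]
      simp
    have hetop' : e (n+1) ≠ 0 := by
      rw [hetop]; exact mul_ne_zero hc hg0
    set c' : ℕ → KK := fun m => e (m+1) with hc'def
    have hq : ∀ l : Fin (n+1), ∑ m ∈ Finset.range (n+1), c' m * (⇑d)^[m] (d (q l)) = 0 := by
      intro l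
      have h1 : ∀ m ∈ Finset.range (n+1), c' m * (⇑d)^[m] (d (q l)) = e (m+1) * (⇑d)^[m+1] (q l) := by
        intro m _
        rw [← Function.iterate_succ_apply]
      rw [Finset.sum_congr rfl h1]
      have h2 : ∑ m ∈ Finset.range (n+2), e m * (⇑d)^[m] (q l)
          = ∑ m ∈ Finset.range (n+1), e (m+1) * (⇑d)^[m+1] (q l) + e 0 * q l := by
        rw [Finset.sum_range_succ' (fun m => e m * (⇑d)^[m] (q l)) (n+1)]
        simp
      have h3 : g 0 * q l = g l.succ := by
        rw [hqdef]
        field_simp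
      have h4 := key (q l)
      rw [h3] at h4
      have h5 := hg l.succ
      rw [h5] at h4
      rw [he0, zero_mul, add_zero] at h2
      rw [← h2, ← h4]
    have hdep := ih c' hetop' (fun l => d (q l)) hq
    rw [Fintype.not_linearIndependent_iff] at hdep
    obtain ⟨γ, hγsum, i0, hγi0⟩ := hdep
    have hdx : d (∑ l, γ l • q l) = 0 := by
      rw [map_sum]
      simp_rw [Derivation.map_smul]
      exact hγsum
    obtain ⟨μ, hμ⟩ := hC _ hdx
    have hcomb : ∑ l, γ l • g l.succ = μ • g 0 := by
      have h6 : (∑ l, γ l • q l) * g 0 = ∑ l, γ l • g l.succ := by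
        rw [Finset.sum_mul]
        apply Finset.sum_congr rfl
        intro l _
        rw [smul_mul_assoc, hqdef]
        simp only []
        rw [inv_mul_cancel_right₀ hg0]
      rw [← h6, hμ]
      exact (Algebra.smul_def μ (g 0)).symm
    have hν : ∑ k, (Fin.cons (-μ) γ : Fin (n+2) → ℂ) k • g k = 0 := by
      rw [Fin.sum_univ_succ (f := fun k => (Fin.cons (-μ) γ : Fin (n+2) → ℂ) k • g k)]
      simp only [Fin.cons_zero, Fin.cons_succ]
      rw [hcomb]
      module
    have := Fintype.linearIndependent_iff.1 hli _ hν i0.succ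
    rw [Fin.cons_succ] at this
    exact hγi0 this




lemma uuIter (d : Derivation ℂ KK KK) (hd : ∀ n : ℕ, d (uu n) = uu (n + 1))
    (M i : ℕ) : (⇑d)^[i] (uu M) = uu (M + i) := by
  induction i with
  | zero => simp
  | succ i ih =>
    rw [Function.iterate_succ_apply', ih, hd (M+i)]
    congr 1

lemma opZero (B : ℕ) (a : ℕ → KK)
    (hzero : ∀ M : ℕ, ∑ i ∈ Finset.range B, a i * uu (M + i) = 0) :
    ∀ i < B, a i = 0 := by
  classical
  obtain ⟨b, hb⟩ := IsLocalization.exist_integer_multiples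
    (nonZeroDivisors RR) (Finset.range B) a
  have hint : ∀ i, i < B → ∃ r : RR, algebraMap RR KK r = (b : RR) • a i := by
    intro i hi
    exact hb i (Finset.mem_range.2 hi)
  set p : ℕ → RR := fun i => if hi : i < B then Classical.choose (hint i hi) else 0 with hpdef
  have hp : ∀ i, i < B → algebraMap RR KK (p i) = algebraMap RR KK (b : RR) * a i := by
    intro i hi
    rw [hpdef]
    simp only [dif_pos hi]
    rw [Classical.choose_spec (hint i hi), ← algebraMap_smul KK (b : RR) (a i), smul_eq_mul]
  set V : ℕ := (Finset.range B).sup (fun i => (p i).vars.sup id) with hVdef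
  set M : ℕ := V + 1 with hMdef
  have hnotvar : ∀ i i' : ℕ, i' < B → (M + i) ∉ (p i').vars := by
    intro i i' hi' hmem
    have h1 : (p i').vars.sup id ≤ V := by
      rw [hVdef]
      exact Finset.le_sup (f := fun i => (p i).vars.sup id) (Finset.mem_range.2 hi')
    have h2 : (M + i : ℕ) ≤ (p i').vars.sup id := Finset.le_sup (f := id) hmem
    omega
  have hPsum : (∑ i ∈ Finset.range B, p i * X (M + i)) = 0 := by
    apply IsFractionRing.injective RR KK
    rw [map_sum, map_zero]
    have : ∀ i ∈ Finset.range B, algebraMap RR KK (p i * X (M+i)) = algebraMap RR KK (b : RR) * (a i * uu (M+i)) := by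
      intro i hi
      rw [map_mul, hp i (Finset.mem_range.1 hi)]
      unfold uu
      ring
    rw [Finset.sum_congr rfl this, ← Finset.mul_sum, hzero M, mul_zero]
  intro i0 hi0
  have hpz := congrArg (pderiv (M + i0)) hPsum
  rw [map_sum, map_zero] at hpz
  have hterm : ∀ i ∈ Finset.range B, pderiv (M + i0) (p i * X (M + i))
      = if i = i0 then p i0 else 0 := by
    intro i hi
    rw [pderiv_mul, pderiv_eq_zero_of_notMem_vars (hnotvar i0 i (Finset.mem_range.1 hi)),
      zero_mul, zero_add]
    by_cases hii : i = i0
    · subst hii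
      rw [pderiv_X_self, mul_one, if_pos rfl]
    · rw [pderiv_X_of_ne (by omega), mul_zero, if_neg hii]
  rw [Finset.sum_congr rfl hterm, Finset.sum_ite_eq' (Finset.range B) i0 (fun _ => p i0),
    if_pos (Finset.mem_range.2 hi0)] at hpz
  have := hp i0 hi0
  rw [hpz, map_zero] at this
  have hbne : algebraMap RR KK (b : RR) ≠ 0 :=
    IsFractionRing.to_map_ne_zero_of_mem_nonZeroDivisors b.2
  exact ((mul_eq_zero.1 this.symm).resolve_left hbne)


end St6

/-- vanishing of bidifferential operators. -/
theorem statement6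
    (d : Derivation ℂ KK KK) (hd : ∀ n : ℕ, d (uu n) = uu (n + 1))
    (m : ℕ → ℕ → KK)
    (hfin : (Function.support fun p : ℕ × ℕ => m p.1 p.2).Finite)
    (W : Submodule ℂ KK) (hWinf : ¬ Module.Finite ℂ W)
    (h : ∀ F : KK, ∀ G ∈ W,
      ∑ᶠ (i : ℕ), ∑ᶠ (j : ℕ), m i j * (⇑d)^[i] F * (⇑d)^[j] G = 0) :
    ∀ i j : ℕ, m i j = 0 := by
  classical
  set B : ℕ := (hfin.toFinset.sup fun p => max p.1 p.2) + 1 with hBdef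
  have hB : ∀ i j, m i j ≠ 0 → i < B ∧ j < B := by
    intro i j hij
    have hmem : (i, j) ∈ hfin.toFinset := hfin.mem_toFinset.2 hij
    have hle := Finset.le_sup (f := fun p : ℕ × ℕ => max p.1 p.2) hmem
    have h1 : i ≤ (hfin.toFinset.sup fun p => max p.1 p.2) := le_trans (le_max_left i j) hle
    have h2 : j ≤ (hfin.toFinset.sup fun p => max p.1 p.2) := le_trans (le_max_right i j) hle
    constructor <;> omega
  have hconv : ∀ F : KK, ∀ G ∈ W,
      ∑ i ∈ Finset.range B, ∑ j ∈ Finset.range B, m i j * (⇑d)^[i] F * (⇑d)^[j] G = 0 := by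
    intro F G hG
    have h0 := h F G hG
    have hinner : ∀ i : ℕ, ∑ᶠ (j : ℕ), m i j * (⇑d)^[i] F * (⇑d)^[j] G
        = ∑ j ∈ Finset.range B, m i j * (⇑d)^[i] F * (⇑d)^[j] G := by
      intro i
      apply finsum_eq_sum_of_support_subset
      intro j hj
      simp only [Function.mem_support] at hj
      have : m i j ≠ 0 := fun hz => hj (by rw [hz]; ring)
      simpa using (hB i j this).2
    have houter : ∑ᶠ (i : ℕ), ∑ᶠ (j : ℕ), m i j * (⇑d)^[i] F * (⇑d)^[j] G
        = ∑ i ∈ Finset.range B, ∑ᶠ (j : ℕ), m i j * (⇑d)^[i] F * (⇑d)^[j] G := by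
      apply finsum_eq_sum_of_support_subset
      intro i hi
      simp only [Function.mem_support] at hi
      rw [hinner i] at hi
      have : ∃ j, m i j * (⇑d)^[i] F * (⇑d)^[j] G ≠ 0 := by
        by_contra hc
        push_neg at hc
        exact hi (Finset.sum_eq_zero fun j _ => hc j)
      obtain ⟨j, hj⟩ := this
      have : m i j ≠ 0 := fun hz => hj (by rw [hz]; ring)
      simpa using (hB i j this).1
    rw [houter, Finset.sum_congr rfl (fun i _ => hinner i)] at h0
    exact h0
  have hstep1 : ∀ G ∈ W, ∀ i, i < B → ∑ j ∈ Finset.range B, m i j * (⇑d)^[j] G = 0 := by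
    intro G hG
    apply St6.opZero B (fun i => ∑ j ∈ Finset.range B, m i j * (⇑d)^[j] G)
    intro M
    have h0 := hconv (uu M) G hG
    have : ∀ i ∈ Finset.range B, ∑ j ∈ Finset.range B, m i j * (⇑d)^[i] (uu M) * (⇑d)^[j] G
        = (∑ j ∈ Finset.range B, m i j * (⇑d)^[j] G) * uu (M + i) := by
      intro i _
      rw [Finset.sum_mul]
      apply Finset.sum_congr rfl
      intro j _
      rw [St6.uuIter d hd M i]
      ring
    rw [Finset.sum_congr rfl this] at h0
    exact h0
  -- step 2
  intro i j
  by_contra hne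
  have hiB := (hB i j hne).1
  have hjB := (hB i j hne).2
  set T : Finset ℕ := (Finset.range B).filter (fun j' => m i j' ≠ 0) with hTdef
  have hTne : T.Nonempty := ⟨j, by
    rw [hTdef, Finset.mem_filter]
    exact ⟨Finset.mem_range.2 hjB, hne⟩⟩
  set n : ℕ := T.max' hTne with hndef
  have hnT : n ∈ T := T.max'_mem hTne
  have hcn : m i n ≠ 0 := (Finset.mem_filter.1 hnT).2
  have hnB : n < B := Finset.mem_range.1 (Finset.mem_filter.1 hnT).1
  have hWsol : ∀ G ∈ W, ∑ j' ∈ Finset.range (n+1), m i j' * (⇑d)^[j'] G = 0 := by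
    intro G hG
    have h1 := hstep1 G hG i hiB
    rw [← h1]
    apply Finset.sum_subset (Finset.range_subset_range.2 (by omega))
    intro j' hj' hnj'
    have hj'B : j' < B := Finset.mem_range.1 hj'
    have hj'n : ¬ j' < n + 1 := fun hc => hnj' (Finset.mem_range.2 hc)
    have : m i j' = 0 := by
      by_contra hc
      have : j' ∈ T := Finset.mem_filter.2 ⟨hj', hc⟩
      have := T.le_max' j' this
      omega
    rw [this]
    ring
  obtain ⟨g, hgW, hgli⟩ := exists_indep W hWinf (n+1)
  exact St6.solDep d (fun x hx => St6.const_of_deriv d hd hx) n (m i) hcn g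
    (fun l => hWsol (g l) (hgW l)) hgli
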